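/- arXiv:1012.2223 — 3 statements merged into one kernel-verified Lean document; each statement's English description precedes it below -/
import Mathlib

section
/- For every q ≥ p ≥ 1 and α ∈ (0, p/q), and every r ≥ 0, β(q,r) ≤ 2^{1−α}·(β(p,r))^{α}·(γ_{pq(1−α)/(p−qα)})^{1−α}. -/
open MeasureTheory Filter
open scoped ENNReal NNReal
open scoped RealInnerProductSpace

set_option linter.unusedSectionVars false

section Aux

lemma eLpNorm_eq_lintegral_rpow_nnnorm {α E : Type*} {m : MeasurableSpace α} [NormedAddCommGroup E]
    {p : ℝ≥0∞} {μ : Measure α} {f : α → E} (h0 : p ≠ 0) (htop : p ≠ ∞) :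
    eLpNorm f p μ = (∫⁻ x, (‖f x‖₊ : ℝ≥0∞) ^ p.toReal ∂μ) ^ (1 / p.toReal) :=
  eLpNorm_eq_lintegral_rpow_enorm_toReal h0 htop

lemma ofReal_norm_eq_coe_nnnorm {E : Type*} [NormedAddCommGroup E] (x : E) :
    ENNReal.ofReal ‖x‖ = (‖x‖₊ : ℝ≥0∞) :=
  ofReal_norm x

variable {Ω : Type*} {m mΩ : MeasurableSpace Ω} {P : Measure Ω} [IsProbabilityMeasure P]

/-- Conditional expectation commutes with the inner product against a fixed vector. -/
lemma aux_inner_condexp_comm {n : ℕ} (hm : m ≤ mΩ) (f : Ω → EuclideanSpace ℝ (Fin n))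
    (hf : Integrable f P) (v : EuclideanSpace ℝ (Fin n)) :
    (fun ω => ⟪v, (P[f|m]) ω⟫) =ᵐ[P] P[fun ω => ⟪v, f ω⟫|m] := by
  haveI : SigmaFinite (P.trim hm) := by
    have : IsFiniteMeasure (P.trim hm) := isFiniteMeasure_trim hm
    infer_instance
  have hL : ∀ (g : Ω → EuclideanSpace ℝ (Fin n)) (ν : Measure Ω), Integrable g ν →
      Integrable (fun ω => ⟪v, g ω⟫) ν := by
    intro g ν hg
    simpa using (innerSL ℝ v).integrable_comp hg
  refine ae_eq_condExp_of_forall_setIntegral_eq hm (hL f P hf) ?_ ?_ ?_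
  · intro s _ _
    exact (hL _ _ (integrable_condExp (f := f) (m := m)).restrict)
  · intro s hs hμs
    have h1 : ∫ ω in s, ⟪v, (P[f|m]) ω⟫ ∂P = ⟪v, ∫ ω in s, (P[f|m]) ω ∂P⟫ :=
      ContinuousLinearMap.integral_comp_comm (innerSL ℝ v) integrable_condExp.restrict
    have h2 : ∫ ω in s, ⟪v, f ω⟫ ∂P = ⟪v, ∫ ω in s, f ω ∂P⟫ :=
      ContinuousLinearMap.integral_comp_comm (innerSL ℝ v) hf.restrict
    rw [h1, h2, setIntegral_condExp hm hf hs]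
  · exact StronglyMeasurable.aestronglyMeasurable ((innerSL ℝ v).continuous.comp_stronglyMeasurable
      stronglyMeasurable_condExp)

/-- Conditional Jensen for the norm (vector-valued). -/
lemma aux_norm_condexp_le {n : ℕ} (hm : m ≤ mΩ) (f : Ω → EuclideanSpace ℝ (Fin n))
    (hf : Integrable f P) :
    ∀ᵐ ω ∂P, ‖(P[f|m]) ω‖ ≤ (P[fun ω => ‖f ω‖|m]) ω := by
  obtain ⟨D, hDc, hDd⟩ := TopologicalSpace.exists_countable_dense (EuclideanSpace ℝ (Fin n))
  have key : ∀ v : EuclideanSpace ℝ (Fin n),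
      ∀ᵐ ω ∂P, ⟪v, (P[f|m]) ω⟫ ≤ ‖v‖ * (P[fun ω => ‖f ω‖|m]) ω := by
    intro v
    have h1 := aux_inner_condexp_comm hm f hf v
    have hiv : Integrable (fun ω => ⟪v, f ω⟫) P := by
      simpa using (innerSL ℝ v).integrable_comp hf
    have h2 : P[fun ω => ⟪v, f ω⟫|m] ≤ᵐ[P] P[fun ω => ‖v‖ * ‖f ω‖|m] :=
      condExp_mono hiv (hf.norm.const_mul ‖v‖)
        (ae_of_all _ fun ω => real_inner_le_norm v (f ω))
    have h3 : P[fun ω => ‖v‖ * ‖f ω‖|m] =ᵐ[P] fun ω => ‖v‖ * (P[fun ω => ‖f ω‖|m]) ω := by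
      have := condExp_smul (μ := P) (m := m) (‖v‖) (fun ω => ‖f ω‖)
      simpa [Pi.smul_def, smul_eq_mul] using this
    filter_upwards [h1, h2, h3] with ω e1 e2 e3
    calc ⟪v, (P[f|m]) ω⟫ = (P[fun ω => ⟪v, f ω⟫|m]) ω := e1
      _ ≤ (P[fun ω => ‖v‖ * ‖f ω‖|m]) ω := e2
      _ = ‖v‖ * (P[fun ω => ‖f ω‖|m]) ω := e3
  have hnn : 0 ≤ᵐ[P] P[fun ω => ‖f ω‖|m] :=
    condExp_nonneg (ae_of_all _ fun ω => norm_nonneg _)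
  have keyD : ∀ᵐ ω ∂P, ∀ v ∈ D, ⟪v, (P[f|m]) ω⟫ ≤ ‖v‖ * (P[fun ω => ‖f ω‖|m]) ω :=
    (ae_ball_iff hDc).2 fun v _ => key v
  filter_upwards [keyD, hnn] with ω hω hb0
  set x := (P[f|m]) ω with hxdef
  set b := (P[fun ω => ‖f ω‖|m]) ω with hbdef
  have hb : (0:ℝ) ≤ b := hb0
  by_cases hx : x = 0
  · simpa [hx] using hb
  have hxn : 0 < ‖x‖ := norm_pos_iff.2 hx
  refine le_of_forall_pos_le_add fun δ hδ => ?_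
  set ε : ℝ := min (1/2) (δ / (‖x‖ + b + 1)) with hεdef
  have hden : 0 < ‖x‖ + b + 1 := by positivity
  have hε0 : 0 < ε := lt_min (by norm_num) (by positivity)
  set u : EuclideanSpace ℝ (Fin n) := ‖x‖⁻¹ • x with hudef
  have hun : ‖u‖ = 1 := by
    rw [hudef, norm_smul, norm_inv, norm_norm, inv_mul_cancel₀ hxn.ne']
  obtain ⟨v, hvD, hvu⟩ : ∃ v ∈ D, dist u v < ε := by
    have := Metric.mem_closure_iff.1 (hDd.closure_eq ▸ Set.mem_univ u) ε hε0
    simpa using this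
  have hineq := hω v hvD
  have hinner_u : ⟪u, x⟫ = ‖x‖ := by
    rw [hudef, real_inner_smul_left, real_inner_self_eq_norm_mul_norm]
    field_simp
  have h4 : ⟪v, x⟫ ≥ ‖x‖ - ε * ‖x‖ := by
    have : ⟪v, x⟫ = ⟪u, x⟫ + ⟪v - u, x⟫ := by
      rw [← inner_add_left, add_sub_cancel]
    rw [this, hinner_u]
    have h5 : |⟪v - u, x⟫| ≤ ‖v - u‖ * ‖x‖ := abs_real_inner_le_norm _ _
    have h6 : ‖v - u‖ < ε := by rwa [← dist_eq_norm, dist_comm]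
    nlinarith [abs_le.1 h5, norm_nonneg (v - u), hxn.le]
  have hv_norm : ‖v‖ ≤ 1 + ε := by
    have : ‖v‖ ≤ ‖u‖ + ‖v - u‖ := by
      simpa using norm_add_le u (v - u)
    have h6 : ‖v - u‖ < ε := by rwa [← dist_eq_norm, dist_comm]
    rw [hun] at this; linarith
  have h7 : ‖x‖ - ε * ‖x‖ ≤ (1 + ε) * b := by
    calc ‖x‖ - ε * ‖x‖ ≤ ⟪v, x⟫ := h4
      _ ≤ ‖v‖ * b := hineq
      _ ≤ (1 + ε) * b := mul_le_mul_of_nonneg_right hv_norm hb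
  have hεδ : ε * (‖x‖ + b) ≤ δ := by
    have h8 : ε ≤ δ / (‖x‖ + b + 1) := min_le_right _ _
    have h9 : ε * (‖x‖ + b) ≤ (δ / (‖x‖ + b + 1)) * (‖x‖ + b + 1) :=
      mul_le_mul h8 (by linarith) (by positivity) (by positivity)
    rwa [div_mul_cancel₀ _ hden.ne'] at h9
  nlinarith

/-- Tangent line inequality for `t ↦ t ^ c`, `c ≥ 1`. -/
lemma aux_tangent {c : ℝ} (hc : 1 ≤ c) {s t : ℝ} (hs : 0 < s) (ht : 0 ≤ t) :
    s ^ c + c * s ^ (c - 1) * (t - s) ≤ t ^ c := by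
  have hb := one_add_mul_self_le_rpow_one_add (s := t / s - 1) (by
    have : 0 ≤ t / s := div_nonneg ht hs.le
    linarith) hc
  have h1 : (1 : ℝ) + (t / s - 1) = t / s := by ring
  rw [h1] at hb
  have hsc : 0 < s ^ c := Real.rpow_pos_of_pos hs c
  have h2 : s ^ c * (1 + c * (t / s - 1)) ≤ s ^ c * (t / s) ^ c :=
    mul_le_mul_of_nonneg_left hb hsc.le
  have h3 : s ^ c * (t / s) ^ c = t ^ c := by
    rw [← Real.mul_rpow hs.le (div_nonneg ht hs.le), mul_div_cancel₀ _ hs.ne']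
  have h4 : s ^ (c - 1) = s ^ c / s := Real.rpow_sub_one hs.ne' c
  rw [h3] at h2
  calc s ^ c + c * s ^ (c - 1) * (t - s) = s ^ c * (1 + c * (t / s - 1)) := by
        rw [h4]; field_simp
    _ ≤ t ^ c := h2

/-- Conditional Jensen for `t ↦ t ^ c` on nonnegative functions. -/
lemma aux_condexp_rpow_le {c : ℝ} (hc : 1 ≤ c) (hm : m ≤ mΩ) (g : Ω → ℝ)
    (hg0 : ∀ ω, 0 ≤ g ω) (hgi : Integrable g P)
    (hgci : Integrable (fun ω => g ω ^ c) P) :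
    ∀ᵐ ω ∂P, ((P[g|m]) ω) ^ c ≤ (P[fun ω => g ω ^ c|m]) ω := by
  haveI : SigmaFinite (P.trim hm) := by
    have : IsFiniteMeasure (P.trim hm) := isFiniteMeasure_trim hm
    infer_instance
  have hc0 : (0:ℝ) < c := lt_of_lt_of_le one_pos hc
  have key : ∀ s : {q : ℚ // 0 < q}, ∀ᵐ ω ∂P,
      (s.1:ℝ) ^ c + c * (s.1:ℝ) ^ (c - 1) * ((P[g|m]) ω - s.1) ≤ (P[fun ω => g ω ^ c|m]) ω := by
    rintro ⟨s, hs⟩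
    have hs' : (0:ℝ) < (s:ℝ) := by exact_mod_cast hs
    let a : ℝ := c * (s:ℝ) ^ (c - 1)
    let b : ℝ := (s:ℝ) ^ c - c * (s:ℝ) ^ (c - 1) * s
    have haff_int : Integrable (fun ω => a * g ω + b) P :=
      (hgi.const_mul a).add (integrable_const b)
    have hle : ∀ ω, a * g ω + b ≤ g ω ^ c := by
      intro ω
      have := aux_tangent hc hs' (hg0 ω)
      show c * (s:ℝ) ^ (c - 1) * g ω + ((s:ℝ) ^ c - c * (s:ℝ) ^ (c - 1) * s) ≤ g ω ^ c
      linarith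
    have hmono := condExp_mono (m := m) haff_int hgci (ae_of_all _ hle)
    have hcalc : P[fun ω => a * g ω + b|m] =ᵐ[P] fun ω => a * (P[g|m]) ω + b := by
      have h1 := condExp_add (μ := P) (m := m) (hgi.const_mul a) (integrable_const b)
      have h2 : P[fun ω => a * g ω|m] =ᵐ[P] fun ω => a * (P[g|m]) ω := by
        simpa [Pi.smul_def, smul_eq_mul] using condExp_smul (μ := P) (m := m) a g
      have h3 : P[fun _ : Ω => b|m] = fun _ => b := condExp_const hm b
      filter_upwards [h1, h2] with ω e1 e2
      calc (P[fun ω => a * g ω + b|m]) ω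
          = (P[fun ω => a * g ω|m]) ω + (P[fun _ => b|m]) ω := e1
        _ = a * (P[g|m]) ω + b := by rw [e2, h3]
    filter_upwards [hmono, hcalc] with ω e1 e2
    have h5 : a * (P[g|m]) ω + b ≤ (P[fun ω => g ω ^ c|m]) ω := by
      rw [← e2]; exact e1
    have h6 : c * (s:ℝ) ^ (c - 1) * (P[g|m]) ω + ((s:ℝ) ^ c - c * (s:ℝ) ^ (c - 1) * s)
        ≤ (P[fun ω => g ω ^ c|m]) ω := h5
    linarith
  have keyall : ∀ᵐ ω ∂P, ∀ s : {q : ℚ // 0 < q},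
      (s.1:ℝ) ^ c + c * (s.1:ℝ) ^ (c - 1) * ((P[g|m]) ω - s.1) ≤ (P[fun ω => g ω ^ c|m]) ω :=
    ae_all_iff.2 key
  have hGnn : 0 ≤ᵐ[P] P[g|m] := condExp_nonneg (ae_of_all _ hg0)
  have hHnn : 0 ≤ᵐ[P] P[fun ω => g ω ^ c|m] :=
    condExp_nonneg (ae_of_all _ fun ω => Real.rpow_nonneg (hg0 ω) c)
  filter_upwards [keyall, hGnn, hHnn] with ω hω hG hH
  set x : ℝ := (P[g|m]) ω with hxdef
  set H : ℝ := (P[fun ω => g ω ^ c|m]) ω with hHdef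
  have hG' : (0:ℝ) ≤ x := hG
  have hH' : (0:ℝ) ≤ H := hH
  rcases eq_or_lt_of_le hG' with h0 | hxpos
  · rw [← h0, Real.zero_rpow hc0.ne']; exact hH'
  have hchoice : ∀ nn : ℕ, ∃ qq : ℚ, max (x/2) (x - 1/(nn+1)) < (qq:ℝ) ∧ (qq:ℝ) < x := by
    intro nn
    apply exists_rat_btwn
    apply max_lt (by linarith)
    have : (0:ℝ) < 1/(nn+1) := by positivity
    linarith
  choose sq hsq1 hsq2 using hchoice
  have hsqpos : ∀ nn, (0:ℝ) < (sq nn : ℝ) := fun nn =>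
    lt_of_le_of_lt (by linarith [hxpos] : (0:ℝ) ≤ x/2) (lt_of_le_of_lt (le_max_left _ _) (hsq1 nn))
  have htendsto : Tendsto (fun nn => (sq nn : ℝ)) atTop (nhds x) := by
    have hlow : Tendsto (fun nn : ℕ => x - 1/(nn+1)) atTop (nhds x) := by
      have := tendsto_one_div_add_atTop_nhds_zero_nat (𝕜 := ℝ)
      simpa using (tendsto_const_nhds (x := x)).sub this
    refine tendsto_of_tendsto_of_tendsto_of_le_of_le hlow tendsto_const_nhds ?_ ?_
    · intro nn; exact le_of_lt (lt_of_le_of_lt (le_max_right _ _) (hsq1 nn))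
    · intro nn; exact (hsq2 nn).le
  have htan : Tendsto (fun nn => (sq nn : ℝ) ^ c + c * (sq nn : ℝ) ^ (c-1) * (x - sq nn))
      atTop (nhds (x ^ c)) := by
    have h1 : Tendsto (fun nn => (sq nn : ℝ) ^ c) atTop (nhds (x ^ c)) :=
      ((Real.continuousAt_rpow_const x c (Or.inl hxpos.ne')).tendsto).comp htendsto
    have h2 : Tendsto (fun nn => (sq nn : ℝ) ^ (c-1)) atTop (nhds (x ^ (c-1))) :=
      ((Real.continuousAt_rpow_const x (c-1) (Or.inl hxpos.ne')).tendsto).comp htendsto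
    have h3 : Tendsto (fun nn => x - (sq nn : ℝ)) atTop (nhds 0) := by
      have := (tendsto_const_nhds (x := x)).sub htendsto
      simpa using this
    have := h1.add (((tendsto_const_nhds (x := c)).mul h2).mul h3)
    simpa using this
  exact le_of_tendsto htan (Eventually.of_forall fun nn => hω ⟨sq nn, by
    exact_mod_cast hsqpos nn⟩)

/-- `L^c`-contraction of conditional expectation, vector-valued. -/
lemma aux_eLpNorm_condexp_le {n : ℕ} {c : ℝ} (hc : 1 ≤ c) (hm : m ≤ mΩ)
    (f : Ω → EuclideanSpace ℝ (Fin n)) (hf : MemLp f (ENNReal.ofReal c) P) :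
    eLpNorm (P[f|m]) (ENNReal.ofReal c) P ≤ eLpNorm f (ENNReal.ofReal c) P := by
  haveI : SigmaFinite (P.trim hm) := by
    have : IsFiniteMeasure (P.trim hm) := isFiniteMeasure_trim hm
    infer_instance
  have hc0 : (0:ℝ) < c := lt_of_lt_of_le one_pos hc
  have hoc1 : (1:ℝ≥0∞) ≤ ENNReal.ofReal c := by
    rw [← ENNReal.ofReal_one]; exact ENNReal.ofReal_le_ofReal hc
  have hocne : ENNReal.ofReal c ≠ 0 := (ENNReal.ofReal_pos.2 hc0).ne'
  have hoctop : ENNReal.ofReal c ≠ ⊤ := ENNReal.ofReal_ne_top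
  have htr : (ENNReal.ofReal c).toReal = c := ENNReal.toReal_ofReal hc0.le
  have hfi : Integrable f P := hf.integrable hoc1
  have hgci : Integrable (fun ω => ‖f ω‖ ^ c) P := by
    have := hf.integrable_norm_rpow hocne hoctop
    rwa [htr] at this
  set g : Ω → ℝ := fun ω => ‖f ω‖ with hgdef
  have h1 := aux_norm_condexp_le hm f hfi
  have h2 := aux_condexp_rpow_le hc hm g (fun ω => norm_nonneg _) hfi.norm hgci
  have hGnn : 0 ≤ᵐ[P] P[g|m] := condExp_nonneg (ae_of_all _ fun ω => norm_nonneg _)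
  have hHnn : 0 ≤ᵐ[P] P[fun ω => g ω ^ c|m] :=
    condExp_nonneg (ae_of_all _ fun ω => Real.rpow_nonneg (norm_nonneg _) c)
  have hpt : ∀ᵐ ω ∂P, (‖(P[f|m]) ω‖₊ : ℝ≥0∞) ^ c ≤ ENNReal.ofReal ((P[fun ω => g ω ^ c|m]) ω) := by
    filter_upwards [h1, h2, hGnn] with ω e1 e2 e3
    have hnc : ‖(P[f|m]) ω‖ ^ c ≤ (P[fun ω => g ω ^ c|m]) ω := by
      calc ‖(P[f|m]) ω‖ ^ c ≤ ((P[g|m]) ω) ^ c :=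
            Real.rpow_le_rpow (norm_nonneg _) e1 hc0.le
        _ ≤ (P[fun ω => g ω ^ c|m]) ω := e2
    calc (‖(P[f|m]) ω‖₊ : ℝ≥0∞) ^ c = ENNReal.ofReal (‖(P[f|m]) ω‖ ^ c) := by
          rw [← ofReal_norm_eq_coe_nnnorm, ENNReal.ofReal_rpow_of_nonneg (norm_nonneg _) hc0.le]
      _ ≤ ENNReal.ofReal ((P[fun ω => g ω ^ c|m]) ω) := ENNReal.ofReal_le_ofReal hnc
  have hlin : ∫⁻ ω, (‖(P[f|m]) ω‖₊ : ℝ≥0∞) ^ c ∂P ≤ ∫⁻ ω, (‖f ω‖₊ : ℝ≥0∞) ^ c ∂P := by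
    calc ∫⁻ ω, (‖(P[f|m]) ω‖₊ : ℝ≥0∞) ^ c ∂P
        ≤ ∫⁻ ω, ENNReal.ofReal ((P[fun ω => g ω ^ c|m]) ω) ∂P := lintegral_mono_ae hpt
      _ = ENNReal.ofReal (∫ ω, (P[fun ω => g ω ^ c|m]) ω ∂P) :=
          (ofReal_integral_eq_lintegral_ofReal integrable_condExp hHnn).symm
      _ = ENNReal.ofReal (∫ ω, g ω ^ c ∂P) := by rw [integral_condExp hm]
      _ = ∫⁻ ω, ENNReal.ofReal (g ω ^ c) ∂P :=
          ofReal_integral_eq_lintegral_ofReal hgci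
            (ae_of_all _ fun ω => Real.rpow_nonneg (norm_nonneg _) c)
      _ = ∫⁻ ω, (‖f ω‖₊ : ℝ≥0∞) ^ c ∂P := by
          congr 1; funext ω
          rw [← ENNReal.ofReal_rpow_of_nonneg (norm_nonneg _) hc0.le,
            ofReal_norm_eq_coe_nnnorm]
  rw [eLpNorm_eq_lintegral_rpow_nnnorm hocne hoctop,
    eLpNorm_eq_lintegral_rpow_nnnorm hocne hoctop, htr]
  exact ENNReal.rpow_le_rpow hlin (by positivity)

/-- Lyapunov interpolation of `eLpNorm`s. -/
lemma aux_interp {E : Type*} [NormedAddCommGroup E] {Y : Ω → E}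
    (hY : AEStronglyMeasurable Y P) {pp θ qq a b : ℝ}
    (hpp : 0 < pp) (hθ : 0 < θ) (hqq : 0 < qq) (ha : 0 < a) (hb : 0 < b)
    (hab : a + b = 1) (hsum : a * qq / pp + b * qq / θ = 1) :
    eLpNorm Y (ENNReal.ofReal qq) P ≤
      (eLpNorm Y (ENNReal.ofReal pp) P) ^ a * (eLpNorm Y (ENNReal.ofReal θ) P) ^ b := by
  set s : ℝ := a * qq / pp with hsdef
  set t : ℝ := b * qq / θ with htdef
  have hs : 0 < s := by positivity
  have ht : 0 < t := by positivity
  have hst : s + t = 1 := hsum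
  have hpe : pp * s + θ * t = qq := by
    rw [hsdef, htdef]; field_simp
    nlinarith [hab]
  have hptw : ∀ ω, (‖Y ω‖₊ : ℝ≥0∞) ^ qq =
      ((‖Y ω‖₊ : ℝ≥0∞) ^ pp) ^ s * ((‖Y ω‖₊ : ℝ≥0∞) ^ θ) ^ t := by
    intro ω
    rw [← ENNReal.rpow_mul, ← ENNReal.rpow_mul,
      ← ENNReal.rpow_add_of_nonneg _ _ (by positivity) (by positivity), hpe]
  have hmeas : AEMeasurable (fun ω => ((‖Y ω‖₊ : ℝ≥0∞)) ^ pp) P := hY.enorm.pow_const pp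
  have hmeas2 : AEMeasurable (fun ω => ((‖Y ω‖₊ : ℝ≥0∞)) ^ θ) P := hY.enorm.pow_const θ
  have hH := ENNReal.lintegral_mul_norm_pow_le hmeas hmeas2 hs.le ht.le hst
  have hkey : ∫⁻ ω, (‖Y ω‖₊ : ℝ≥0∞) ^ qq ∂P ≤
      (∫⁻ ω, (‖Y ω‖₊ : ℝ≥0∞) ^ pp ∂P) ^ s * (∫⁻ ω, (‖Y ω‖₊ : ℝ≥0∞) ^ θ ∂P) ^ t := by
    calc ∫⁻ ω, (‖Y ω‖₊ : ℝ≥0∞) ^ qq ∂P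
        = ∫⁻ ω, ((‖Y ω‖₊ : ℝ≥0∞) ^ pp) ^ s * ((‖Y ω‖₊ : ℝ≥0∞) ^ θ) ^ t ∂P := by
          congr 1; funext ω; exact hptw ω
      _ ≤ _ := hH
  have e1 : eLpNorm Y (ENNReal.ofReal qq) P = (∫⁻ ω, (‖Y ω‖₊ : ℝ≥0∞) ^ qq ∂P) ^ (1/qq) := by
    rw [eLpNorm_eq_lintegral_rpow_nnnorm (ENNReal.ofReal_pos.2 hqq).ne' ENNReal.ofReal_ne_top,
      ENNReal.toReal_ofReal hqq.le]
  have e2 : eLpNorm Y (ENNReal.ofReal pp) P = (∫⁻ ω, (‖Y ω‖₊ : ℝ≥0∞) ^ pp ∂P) ^ (1/pp) := by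
    rw [eLpNorm_eq_lintegral_rpow_nnnorm (ENNReal.ofReal_pos.2 hpp).ne' ENNReal.ofReal_ne_top,
      ENNReal.toReal_ofReal hpp.le]
  have e3 : eLpNorm Y (ENNReal.ofReal θ) P = (∫⁻ ω, (‖Y ω‖₊ : ℝ≥0∞) ^ θ ∂P) ^ (1/θ) := by
    rw [eLpNorm_eq_lintegral_rpow_nnnorm (ENNReal.ofReal_pos.2 hθ).ne' ENNReal.ofReal_ne_top,
      ENNReal.toReal_ofReal hθ.le]
  rw [e1, e2, e3]
  calc (∫⁻ ω, (‖Y ω‖₊ : ℝ≥0∞) ^ qq ∂P) ^ (1/qq)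
      ≤ ((∫⁻ ω, (‖Y ω‖₊ : ℝ≥0∞) ^ pp ∂P) ^ s * (∫⁻ ω, (‖Y ω‖₊ : ℝ≥0∞) ^ θ ∂P) ^ t) ^ (1/qq) :=
        ENNReal.rpow_le_rpow hkey (by positivity)
    _ = ((∫⁻ ω, (‖Y ω‖₊ : ℝ≥0∞) ^ pp ∂P) ^ (1/pp)) ^ a *
        ((∫⁻ ω, (‖Y ω‖₊ : ℝ≥0∞) ^ θ ∂P) ^ (1/θ)) ^ b := by
        rw [ENNReal.mul_rpow_of_nonneg _ _ (by positivity), ← ENNReal.rpow_mul,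
          ← ENNReal.rpow_mul, ← ENNReal.rpow_mul, ← ENNReal.rpow_mul]
        congr 1
        · congr 1
          rw [hsdef]; field_simp
        · congr 1
          rw [htdef]; field_simp

end Aux

/-- For every `q ≥ p ≥ 1` and `α ∈ (0, p/q)` and every `r ≥ 0`,
`β(q,r) ≤ 2^{1−α} · β(p,r)^α · γ_{pq(1−α)/(p−qα)}^{1−α}`, where
`β(p,r) = sup_{k≥0} ‖X(k) − E[X(k)|F_{k−r,k+r}]‖_{L^p(P)}` and
`γ_θ = (∫|x|^θ dμ)^{1/θ}`. -/
theorem beta_interpolation {Ω : Type*} [mΩ : MeasurableSpace Ω]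
    (P : Measure Ω) [IsProbabilityMeasure P]
    (℘ : ℕ)
    -- the nested family of σ-algebras `F_{s,t}`, indexed by extended reals
    (𝓕 : EReal → EReal → MeasurableSpace Ω)
    (h𝓕mono : ∀ s t s' t' : EReal, s' ≤ s → t ≤ t' → 𝓕 s t ≤ 𝓕 s' t')
    (h𝓕le : ∀ s t : EReal, 𝓕 s t ≤ mΩ)
    -- the ℝ^℘-valued process, identically distributed with law μ
    (X : ℕ → Ω → EuclideanSpace ℝ (Fin ℘))
    (hXmeas : ∀ k, Measurable (X k))
    (μ : Measure (EuclideanSpace ℝ (Fin ℘)))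
    (hXμ : ∀ k, Measure.map (X k) P = μ)
    (p q α : ℝ) (hp : 1 ≤ p) (hpq : p ≤ q) (hα : α ∈ Set.Ioo 0 (p / q)) (r : ℕ) :
    (⨆ k : ℕ, eLpNorm
        (fun ω => X k ω -
          (P[X k | 𝓕 (((k : ℝ) - (r : ℝ) : ℝ) : EReal) (((k : ℝ) + (r : ℝ) : ℝ) : EReal)]) ω)
        (ENNReal.ofReal q) P)
      ≤ ENNReal.ofReal (2 ^ (1 - α))
        * (⨆ k : ℕ, eLpNorm
            (fun ω => X k ω -
              (P[X k | 𝓕 (((k : ℝ) - (r : ℝ) : ℝ) : EReal) (((k : ℝ) + (r : ℝ) : ℝ) : EReal)]) ω)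
            (ENNReal.ofReal p) P) ^ α
        * ((∫⁻ x, (‖x‖₊ : ℝ≥0∞) ^ (p * q * (1 - α) / (p - q * α)) ∂μ)
            ^ (1 / (p * q * (1 - α) / (p - q * α)))) ^ (1 - α) := by

  obtain ⟨hα0, hαpq⟩ := hα
  have hp0 : (0:ℝ) < p := lt_of_lt_of_le one_pos hp
  have hq0 : (0:ℝ) < q := lt_of_lt_of_le hp0 hpq
  have hq1 : (1:ℝ) ≤ q := le_trans hp hpq
  have hαq : α * q < p := (lt_div_iff₀ hq0).1 hαpq
  have hα1 : α < 1 := lt_of_lt_of_le hαpq (div_le_one_of_le₀ hpq hq0.le)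
  have h1α : (0:ℝ) < 1 - α := by linarith
  have hpqα : (0:ℝ) < p - q * α := by nlinarith
  set θ : ℝ := p * q * (1 - α) / (p - q * α) with hθdef
  have hθ0 : (0:ℝ) < θ := by rw [hθdef]; positivity
  have hθq : q ≤ θ := by
    rw [hθdef, le_div_iff₀ hpqα]
    nlinarith [mul_le_mul_of_nonneg_right hpq (mul_pos hα0 hq0).le]
  have hθ1 : (1:ℝ) ≤ θ := le_trans hq1 hθq
  have hsum : α * q / p + (1 - α) * q / θ = 1 := by
    rw [hθdef]; field_simp; ring
  have hYmeas : ∀ k, AEStronglyMeasurable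
      (fun ω => X k ω -
        (P[X k | 𝓕 (((k : ℝ) - (r : ℝ) : ℝ) : EReal) (((k : ℝ) + (r : ℝ) : ℝ) : EReal)]) ω) P :=
    fun k => ((hXmeas k).aestronglyMeasurable).sub
      ((stronglyMeasurable_condExp.mono (h𝓕le _ _)).aestronglyMeasurable)
  set I : ℝ≥0∞ := ∫⁻ x, (‖x‖₊ : ℝ≥0∞) ^ θ ∂μ with hIdef
  have hIk : ∀ k, ∫⁻ ω, (‖X k ω‖₊ : ℝ≥0∞) ^ θ ∂P = I := by
    intro k
    rw [hIdef, ← hXμ k, lintegral_map (measurable_nnnorm.coe_nnreal_ennreal.pow_const θ)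
      (hXmeas k)]
  have hγk : ∀ k, eLpNorm (X k) (ENNReal.ofReal θ) P = I ^ (1/θ) := by
    intro k
    rw [eLpNorm_eq_lintegral_rpow_nnnorm (ENNReal.ofReal_pos.2 hθ0).ne' ENNReal.ofReal_ne_top,
      ENNReal.toReal_ofReal hθ0.le, hIk k]
  by_cases hItop : I = ⊤
  · by_cases hβ : (⨆ k : ℕ, eLpNorm
        (fun ω => X k ω -
          (P[X k | 𝓕 (((k : ℝ) - (r : ℝ) : ℝ) : EReal) (((k : ℝ) + (r : ℝ) : ℝ) : EReal)]) ω)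
        (ENNReal.ofReal p) P) = 0
    · have hz : ∀ k, eLpNorm
          (fun ω => X k ω -
            (P[X k | 𝓕 (((k : ℝ) - (r : ℝ) : ℝ) : EReal) (((k : ℝ) + (r : ℝ) : ℝ) : EReal)]) ω)
          (ENNReal.ofReal p) P = 0 := fun k =>
        le_antisymm (hβ ▸ le_iSup (fun k => eLpNorm
          (fun ω => X k ω -
            (P[X k | 𝓕 (((k : ℝ) - (r : ℝ) : ℝ) : EReal) (((k : ℝ) + (r : ℝ) : ℝ) : EReal)]) ω)
          (ENNReal.ofReal p) P) k) zero_le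
      refine le_trans (iSup_le fun k => ?_) zero_le
      have h0 := (eLpNorm_eq_zero_iff (hYmeas k) (ENNReal.ofReal_pos.2 hp0).ne').1 (hz k)
      rw [eLpNorm_congr_ae h0, eLpNorm_zero]
    · have h3 : (I ^ (1/θ)) ^ (1-α) = ⊤ := by
        rw [hItop, ENNReal.top_rpow_of_pos (by positivity), ENNReal.top_rpow_of_pos h1α]
      rw [h3, ENNReal.mul_top ?_]
      · exact le_top
      · apply mul_ne_zero
        · exact (ENNReal.ofReal_pos.2 (Real.rpow_pos_of_pos two_pos _)).ne'
        · intro h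
          rcases ENNReal.rpow_eq_zero_iff.1 h with ⟨h1, _⟩ | ⟨_, h2⟩
          · exact hβ h1
          · linarith
  · have hmem : ∀ k, MemLp (X k) (ENNReal.ofReal θ) P := fun k =>
      ⟨(hXmeas k).aestronglyMeasurable, by
        rw [hγk k]; exact ENNReal.rpow_lt_top_of_nonneg (by positivity) hItop⟩
    refine iSup_le fun k => ?_
    have hmle := h𝓕le (((k : ℝ) - (r : ℝ) : ℝ) : EReal) (((k : ℝ) + (r : ℝ) : ℝ) : EReal)
    set G : MeasurableSpace Ω :=
      𝓕 (((k : ℝ) - (r : ℝ) : ℝ) : EReal) (((k : ℝ) + (r : ℝ) : ℝ) : EReal) with hGdef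
    set Yk : Ω → EuclideanSpace ℝ (Fin ℘) := fun ω => X k ω - (P[X k | G]) ω with hYkdef
    set S : ℝ≥0∞ := ⨆ k : ℕ, eLpNorm
        (fun ω => X k ω -
          (P[X k | 𝓕 (((k : ℝ) - (r : ℝ) : ℝ) : EReal) (((k : ℝ) + (r : ℝ) : ℝ) : EReal)]) ω)
        (ENNReal.ofReal p) P with hSdef
    have hYkS : eLpNorm Yk (ENNReal.ofReal p) P ≤ S := by
      rw [hSdef]
      exact le_iSup (fun k => eLpNorm
        (fun ω => X k ω -
          (P[X k | 𝓕 (((k : ℝ) - (r : ℝ) : ℝ) : EReal) (((k : ℝ) + (r : ℝ) : ℝ) : EReal)]) ω)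
        (ENNReal.ofReal p) P) k
    have hθ' : (1:ℝ≥0∞) ≤ ENNReal.ofReal θ := by
      rw [← ENNReal.ofReal_one]; exact ENNReal.ofReal_le_ofReal hθ1
    have htri : eLpNorm Yk (ENNReal.ofReal θ) P ≤ 2 * I ^ (1/θ) := by
      calc eLpNorm Yk (ENNReal.ofReal θ) P
          ≤ eLpNorm (X k) (ENNReal.ofReal θ) P + eLpNorm (P[X k | G]) (ENNReal.ofReal θ) P :=
            eLpNorm_sub_le ((hXmeas k).aestronglyMeasurable)
              ((stronglyMeasurable_condExp.mono hmle).aestronglyMeasurable) hθ'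
        _ ≤ I ^ (1/θ) + I ^ (1/θ) := add_le_add (hγk k).le
            (le_trans (aux_eLpNorm_condexp_le hθ1 hmle (X k) (hmem k)) (hγk k).le)
        _ = 2 * I ^ (1/θ) := (two_mul _).symm
    have hint : eLpNorm Yk (ENNReal.ofReal q) P ≤
        (eLpNorm Yk (ENNReal.ofReal p) P) ^ α * (eLpNorm Yk (ENNReal.ofReal θ) P) ^ (1 - α) :=
      aux_interp (hYmeas k) hp0 hθ0 hq0 hα0 h1α (by ring) hsum
    calc eLpNorm Yk (ENNReal.ofReal q) P
        ≤ (eLpNorm Yk (ENNReal.ofReal p) P) ^ α *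
            (eLpNorm Yk (ENNReal.ofReal θ) P) ^ (1 - α) := hint
      _ ≤ S ^ α * (2 * I ^ (1/θ)) ^ (1 - α) :=
          mul_le_mul' (ENNReal.rpow_le_rpow hYkS hα0.le) (ENNReal.rpow_le_rpow htri h1α.le)
      _ = ENNReal.ofReal (2 ^ (1 - α)) * S ^ α * (I ^ (1/θ)) ^ (1 - α) := by
          rw [ENNReal.mul_rpow_of_nonneg _ _ h1α.le]
          have h2 : (2:ℝ≥0∞) ^ (1-α) = ENNReal.ofReal (2 ^ (1-α)) := by
            rw [← ENNReal.ofReal_rpow_of_pos two_pos]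
            norm_num
          rw [h2]; ring
end

section
/- Let f(x,ω) be a jointly measurable function of x ∈ ℝ^d and ω such that for almost all ω, |f(x,ω) − f(y,ω)| ≤ H(ω)(1+|x|^h+|y|^h)|x−y|^δ for all x,y, where H is a nonnegative random variable. Let X, Y be ℝ^d-valued random vectors with ‖X‖_{L^m} ≤ γ_m and ‖Y‖_{L^m} ≤ γ_m. If 1/a ≥ 1/p + h/m + δ/q, then ‖f(X(ω),ω) − f(Y(ω),ω)‖_{L^a} ≤ (1+2γ_m^h)·‖H‖_{L^p}·‖X−Y‖_{L^q}^{δ}. -/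
open MeasureTheory Filter
open scoped ENNReal NNReal

/-- if `|f(x,ω) − f(y,ω)| ≤ H(ω)(1+|x|^h+|y|^h)|x−y|^δ` for a.e. `ω` and all
`x,y`, `X`, `Y` are `ℝ^d`-valued random vectors with `‖X‖_{L^m}, ‖Y‖_{L^m} ≤ γ_m`, and
`1/a ≥ 1/p + h/m + δ/q`, then
`‖f(X(ω),ω) − f(Y(ω),ω)‖_{L^a} ≤ (1+2γ_m^h)·‖H‖_{L^p}·‖X−Y‖_{L^q}^δ`. -/
theorem holder_composition {Ω : Type*} [MeasurableSpace Ω]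
    (P : Measure Ω) [IsProbabilityMeasure P]
    (d : ℕ) (f : EuclideanSpace ℝ (Fin d) → Ω → ℝ)
    (hfmeas : Measurable (Function.uncurry f))
    (H : Ω → ℝ) (hHpos : ∀ ω, 0 ≤ H ω)
    (h δ : ℝ) (hh : 0 ≤ h) (hδ : δ ∈ Set.Ioc (0:ℝ) 1)
    (hbound : ∀ᵐ ω ∂P, ∀ x y,
      |f x ω - f y ω| ≤ H ω * (1 + ‖x‖ ^ h + ‖y‖ ^ h) * ‖x - y‖ ^ δ)
    (X Y : Ω → EuclideanSpace ℝ (Fin d)) (hX : Measurable X) (hY : Measurable Y)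
    (a p q m γm : ℝ) (ha : 1 ≤ a) (hp : 1 ≤ p) (hq : 1 ≤ q) (hm : 1 ≤ m) (hγ : 0 ≤ γm)
    (hXm : eLpNorm X (ENNReal.ofReal m) P ≤ ENNReal.ofReal γm)
    (hYm : eLpNorm Y (ENNReal.ofReal m) P ≤ ENNReal.ofReal γm)
    (hexp : 1 / p + h / m + δ / q ≤ 1 / a) :
    eLpNorm (fun ω => f (X ω) ω - f (Y ω) ω) (ENNReal.ofReal a) P ≤
      ENNReal.ofReal (1 + 2 * γm ^ h) * eLpNorm H (ENNReal.ofReal p) P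
        * (eLpNorm (fun ω => X ω - Y ω) (ENNReal.ofReal q) P) ^ δ := by
  obtain ⟨hδ0, hδ1⟩ := hδ
  have hp0 : (0:ℝ) < p := lt_of_lt_of_le one_pos hp
  have hq0 : (0:ℝ) < q := lt_of_lt_of_le one_pos hq
  have hm0 : (0:ℝ) < m := lt_of_lt_of_le one_pos hm
  have ha0 : (0:ℝ) < a := lt_of_lt_of_le one_pos ha
  -- h ≤ m
  have hhm : h ≤ m := by
    have h1p : (0:ℝ) < 1 / p := by positivity
    have h1q : (0:ℝ) < δ / q := by positivity
    have h1a : 1 / a ≤ 1 := by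
      rw [div_le_one ha0]; exact ha
    have : h / m ≤ 1 := by linarith
    rwa [div_le_one hm0] at this
  -- measurability
  have hGX : Measurable (fun ω => f (X ω) ω) := by
    have : Measurable (fun ω => (X ω, ω)) := hX.prodMk measurable_id
    exact hfmeas.comp this
  have hGY : Measurable (fun ω => f (Y ω) ω) := by
    have : Measurable (fun ω => (Y ω, ω)) := hY.prodMk measurable_id
    exact hfmeas.comp this
  set G : Ω → ℝ := fun ω => f (X ω) ω - f (Y ω) ω with hGdef
  have hGm : Measurable G := hGX.sub hGY
  set g₂ : Ω → ℝ := fun ω => 1 + ‖X ω‖ ^ h + ‖Y ω‖ ^ h with hg₂def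
  set g₃ : Ω → ℝ := fun ω => ‖X ω - Y ω‖ ^ δ with hg₃def
  have hg₂m : Measurable g₂ :=
    ((measurable_const.add (hX.norm.pow measurable_const)).add (hY.norm.pow measurable_const))
  have hg₃m : Measurable g₃ := ((hX.sub hY).norm.pow measurable_const)
  have hg₂1 : ∀ ω, (1:ℝ) ≤ g₂ ω := fun ω => by
    have h1 := Real.rpow_nonneg (norm_nonneg (X ω)) h
    have h2 := Real.rpow_nonneg (norm_nonneg (Y ω)) h
    simp only [hg₂def]; linarith
  have hg₂0 : ∀ ω, (0:ℝ) < g₂ ω := fun ω => lt_of_lt_of_le one_pos (hg₂1 ω)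
  have hg₃0 : ∀ ω, 0 ≤ g₃ ω := fun ω => Real.rpow_nonneg (norm_nonneg _) δ
  set H' : Ω → ℝ := fun ω => |G ω| / (g₂ ω * g₃ ω) with hH'def
  have hH'm : Measurable H' := hGm.abs.div (hg₂m.mul hg₃m)
  have hH'0 : ∀ ω, 0 ≤ H' ω := fun ω =>
    div_nonneg (abs_nonneg _) (mul_nonneg (hg₂0 ω).le (hg₃0 ω))
  -- a.e. facts
  have hae : ∀ᵐ ω ∂P, |G ω| ≤ H ω * g₂ ω * g₃ ω :=
    hbound.mono fun ω hb => hb (X ω) (Y ω)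
  have hH'leH : ∀ᵐ ω ∂P, H' ω ≤ H ω := by
    refine hae.mono fun ω hb => ?_
    rcases eq_or_lt_of_le (hg₃0 ω) with h0 | h0
    · simp only [hH'def, ← h0, mul_zero, div_zero]
      exact hHpos ω
    · simp only [hH'def]
      rw [div_le_iff₀ (mul_pos (hg₂0 ω) h0)]
      calc |G ω| ≤ H ω * g₂ ω * g₃ ω := hb
        _ = H ω * (g₂ ω * g₃ ω) := by ring
  have heq : ∀ᵐ ω ∂P, |G ω| = H' ω * (g₂ ω * g₃ ω) := by
    refine hae.mono fun ω hb => ?_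
    rcases eq_or_lt_of_le (hg₃0 ω) with h0 | h0
    · have hG0 : |G ω| = 0 := le_antisymm (by
        calc |G ω| ≤ H ω * g₂ ω * g₃ ω := hb
          _ = 0 := by rw [← h0, mul_zero]) (abs_nonneg _)
      simp only [hH'def, ← h0, mul_zero, div_zero, zero_mul, hG0]
    · simp only [hH'def]
      rw [div_mul_cancel₀]
      exact (mul_pos (hg₂0 ω) h0).ne'
  -- exponents
  set pe : ℝ≥0∞ := ENNReal.ofReal p with hpedef
  set r₂ : ℝ≥0∞ := if h = 0 then ∞ else ENNReal.ofReal (m / h) with hr₂def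
  set r₃ : ℝ≥0∞ := ENNReal.ofReal (q / δ) with hr₃def
  set r' : ℝ≥0∞ := (1 / r₂ + 1 / r₃)⁻¹ with hr'def
  set r : ℝ≥0∞ := (1 / pe + 1 / r')⁻¹ with hrdef
  have h1pe : 1 / pe = ENNReal.ofReal (1 / p) := by
    rw [hpedef, one_div, one_div, ENNReal.ofReal_inv_of_pos hp0]
  have h1r₂ : 1 / r₂ = ENNReal.ofReal (h / m) := by
    rcases eq_or_lt_of_le hh with h0 | h0
    · simp [hr₂def, ← h0]
    · rw [hr₂def, if_neg h0.ne', one_div, ← ENNReal.ofReal_inv_of_pos (div_pos hm0 h0), inv_div]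
  have h1r₃ : 1 / r₃ = ENNReal.ofReal (δ / q) := by
    rw [hr₃def, one_div, ← ENNReal.ofReal_inv_of_pos (div_pos hq0 hδ0), inv_div]
  have h1r' : 1 / r' = 1 / r₂ + 1 / r₃ := by
    rw [hr'def, one_div, inv_inv]
  have hr : 1 / r = 1 / pe + 1 / r' := by
    rw [hrdef, one_div, inv_inv]
  have hale : ENNReal.ofReal a ≤ r := by
    have hsum : 1 / r = ENNReal.ofReal (1 / p + h / m + δ / q) := by
      rw [hr, h1r', h1pe, h1r₂, h1r₃, ← ENNReal.ofReal_add (by positivity) (by positivity),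
        ← ENNReal.ofReal_add (by positivity) (by positivity), add_assoc]
    have hle : r⁻¹ ≤ (ENNReal.ofReal a)⁻¹ := by
      calc r⁻¹ = ENNReal.ofReal (1 / p + h / m + δ / q) := by rw [← one_div r, hsum]
        _ ≤ ENNReal.ofReal a⁻¹ :=
            ENNReal.ofReal_le_ofReal (by rw [inv_eq_one_div]; exact hexp)
        _ = (ENNReal.ofReal a)⁻¹ := ENNReal.ofReal_inv_of_pos ha0
    exact ENNReal.inv_le_inv.mp hle
  -- main chain pieces
  set Ψ : Ω → ℝ := fun ω => g₂ ω * g₃ ω with hΨdef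
  set Φ : Ω → ℝ := fun ω => H' ω * Ψ ω with hΦdef
  have hΨm : Measurable Ψ := hg₂m.mul hg₃m
  have hΦm : Measurable Φ := hH'm.mul hΨm
  have step1 : eLpNorm G (ENNReal.ofReal a) P ≤ eLpNorm Φ (ENNReal.ofReal a) P := by
    refine eLpNorm_mono_ae (heq.mono fun ω hω => ?_)
    rw [Real.norm_eq_abs, hω]
    exact le_abs_self _
  have step2 : eLpNorm Φ (ENNReal.ofReal a) P ≤ eLpNorm Φ r P :=
    eLpNorm_le_eLpNorm_of_exponent_le hale hΦm.aestronglyMeasurable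
  have step3 : eLpNorm Φ r P ≤ eLpNorm H' pe P * eLpNorm Ψ r' P := by
    have := eLpNorm_smul_le_mul_eLpNorm (f := Ψ) (φ := H')
      hΨm.aestronglyMeasurable hH'm.aestronglyMeasurable (hpqr := ⟨by simpa only [one_div] using hr.symm⟩) (μ := P)
    exact this
  have step4 : eLpNorm Ψ r' P ≤ eLpNorm g₂ r₂ P * eLpNorm g₃ r₃ P := by
    have := eLpNorm_smul_le_mul_eLpNorm (f := g₃) (φ := g₂)
      hg₃m.aestronglyMeasurable hg₂m.aestronglyMeasurable (hpqr := ⟨by simpa only [one_div] using h1r'.symm⟩) (μ := P)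
    exact this
  have step5 : eLpNorm H' pe P ≤ eLpNorm H pe P := by
    refine eLpNorm_mono_ae (hH'leH.mono fun ω hω => ?_)
    rw [Real.norm_eq_abs, Real.norm_eq_abs, abs_of_nonneg (hH'0 ω), abs_of_nonneg (hHpos ω)]
    exact hω
  have hγh : (0:ℝ) ≤ γm ^ h := Real.rpow_nonneg hγ h
  have step6 : eLpNorm g₂ r₂ P ≤ ENNReal.ofReal (1 + 2 * γm ^ h) := by
    rcases eq_or_lt_of_le hh with h0 | h0
    · -- h = 0
      have hg₂3 : g₂ = fun _ => (3:ℝ) := by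
        funext ω
        simp [hg₂def, ← h0, Real.rpow_zero]
        norm_num
      have hr₂top : r₂ = ∞ := by rw [hr₂def, if_pos h0.symm]
      rw [hg₂3, hr₂top, eLpNorm_const (3:ℝ) (by simp) (IsProbabilityMeasure.ne_zero P)]
      have h3 : γm ^ h = 1 := by rw [← h0, Real.rpow_zero]
      rw [h3, measure_univ]
      have : ‖(3:ℝ)‖ₑ = ENNReal.ofReal 3 := by
        rw [← ofReal_norm]
        norm_num
      simp only [ENNReal.one_rpow, mul_one, this]
      exact ENNReal.ofReal_le_ofReal (by norm_num)
    · -- h > 0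
      have hr₂eq : r₂ = ENNReal.ofReal (m / h) := by rw [hr₂def, if_neg h0.ne']
      have hr₂1 : (1:ℝ≥0∞) ≤ r₂ := by
        rw [hr₂eq]
        exact ENNReal.one_le_ofReal.mpr ((one_le_div h0).mpr hhm)
      have hmulm : r₂ * ENNReal.ofReal h = ENNReal.ofReal m := by
        rw [hr₂eq, ← ENNReal.ofReal_mul (by positivity), div_mul_cancel₀ _ h0.ne']
      have hXh : eLpNorm (fun ω => ‖X ω‖ ^ h) r₂ P ≤ ENNReal.ofReal (γm ^ h) := by
        rw [eLpNorm_norm_rpow X h0, hmulm, ← ENNReal.ofReal_rpow_of_nonneg hγ hh]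
        exact ENNReal.rpow_le_rpow hXm hh
      have hYh : eLpNorm (fun ω => ‖Y ω‖ ^ h) r₂ P ≤ ENNReal.ofReal (γm ^ h) := by
        rw [eLpNorm_norm_rpow Y h0, hmulm, ← ENNReal.ofReal_rpow_of_nonneg hγ hh]
        exact ENNReal.rpow_le_rpow hYm hh
      have h1 : eLpNorm (fun _ : Ω => (1:ℝ)) r₂ P = 1 := by
        rw [eLpNorm_const (1:ℝ) (by rw [hr₂eq]; simp [ENNReal.ofReal_eq_zero]; positivity)
          (IsProbabilityMeasure.ne_zero P)]
        simp [measure_univ]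
      have tri : eLpNorm g₂ r₂ P ≤
          eLpNorm (fun _ : Ω => (1:ℝ)) r₂ P + eLpNorm (fun ω => ‖X ω‖ ^ h) r₂ P
            + eLpNorm (fun ω => ‖Y ω‖ ^ h) r₂ P := by
        have hg₂eq : g₂ = (fun ω => ((1:ℝ) + ‖X ω‖ ^ h)) + (fun ω => ‖Y ω‖ ^ h) := rfl
        calc eLpNorm g₂ r₂ P
            ≤ eLpNorm (fun ω => (1:ℝ) + ‖X ω‖ ^ h) r₂ P
              + eLpNorm (fun ω => ‖Y ω‖ ^ h) r₂ P := by
              rw [hg₂eq]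
              exact eLpNorm_add_le
                (measurable_const.add (hX.norm.pow measurable_const)).aestronglyMeasurable
                (hY.norm.pow measurable_const).aestronglyMeasurable hr₂1
          _ ≤ (eLpNorm (fun _ : Ω => (1:ℝ)) r₂ P + eLpNorm (fun ω => ‖X ω‖ ^ h) r₂ P)
              + eLpNorm (fun ω => ‖Y ω‖ ^ h) r₂ P := by
              gcongr
              exact eLpNorm_add_le measurable_const.aestronglyMeasurable
                (hX.norm.pow measurable_const).aestronglyMeasurable hr₂1
      calc eLpNorm g₂ r₂ P
          ≤ 1 + ENNReal.ofReal (γm ^ h) + ENNReal.ofReal (γm ^ h) := by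
            refine tri.trans ?_
            rw [h1]
            exact add_le_add (add_le_add le_rfl hXh) hYh
        _ = ENNReal.ofReal (1 + 2 * γm ^ h) := by
            rw [← ENNReal.ofReal_one, ← ENNReal.ofReal_add (by norm_num) hγh,
              ← ENNReal.ofReal_add (by positivity) hγh]
            ring_nf
  have step7 : eLpNorm g₃ r₃ P
      = (eLpNorm (fun ω => X ω - Y ω) (ENNReal.ofReal q) P) ^ δ := by
    have := eLpNorm_norm_rpow (fun ω => X ω - Y ω) hδ0 (p := r₃) (μ := P)
    rw [hg₃def]
    rw [this]
    congr 1
    rw [hr₃def, ← ENNReal.ofReal_mul (by positivity), div_mul_cancel₀ _ hδ0.ne']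
  calc eLpNorm G (ENNReal.ofReal a) P
      ≤ eLpNorm H' pe P * eLpNorm Ψ r' P := (step1.trans step2).trans step3
    _ ≤ eLpNorm H pe P * (eLpNorm g₂ r₂ P * eLpNorm g₃ r₃ P) :=
        mul_le_mul' step5 step4
    _ ≤ eLpNorm H pe P * (ENNReal.ofReal (1 + 2 * γm ^ h)
          * (eLpNorm (fun ω => X ω - Y ω) (ENNReal.ofReal q) P) ^ δ) := by
        rw [← step7]
        exact mul_le_mul' le_rfl (mul_le_mul' step6 le_rfl)
    _ = ENNReal.ofReal (1 + 2 * γm ^ h) * eLpNorm H pe P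
          * (eLpNorm (fun ω => X ω - Y ω) (ENNReal.ofReal q) P) ^ δ := by ring
end

section
/- Let μ be a probability measure on ℝ with ∫x dμ(x) = 0, ∫x² dμ(x) = 1 and ∫x⁴ dμ(x) < ∞. Let F(x,y) = x²y² − 1, so that ∫F(x,y) dμ(x)dμ(y) = 0, F_1(x) := ∫F(x,y) dμ(y) = x² − 1 and F_2(x,y) := F(x,y) − ∫F(x,z) dμ(z) = x²(y² − 1). Then: (a) ∫ F_2(x,y)·F_1(z) dμ(x)dμ(y)dμ(z) = 0; (b) ∫ F_2(x,y)·F_1(y) dμ(x)dμ(y) = ∫ (y² − 1)² dμ(y); and (c) ∫ (y² − 1)² dμ(y) > 0 unless μ({−1,1}) = 1. Consequently, in the setting of the paper's main theorem with k = ℓ = 2 and an i.i.d. sequence X(0), X(1), X(2), … distributed according to μ, the constant D_{2,1} = (1/2)·∫(y²−1)² dμ(y) is nonzero unless X(0)² = 1 almost surely, so the limiting Gaussian process ξ(t) = η_1(t) + η_2(2t) satisfies E[ξ(t/2)(ξ(t) − ξ(t/2))] = D_{2,1}·t/2 ≠ 0 and does not have independent increments. -/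
open MeasureTheory Filter
open scoped ENNReal NNReal

/-- the example showing the limiting process may have dependent
increments. With `μ` a probability measure on `ℝ` of mean `0`, variance `1` and finite
fourth moment, `F(x,y) = x²y² − 1`, `F₁(x) = x² − 1`, `F₂(x,y) = x²(y²−1)`:
(a) `∫F₂(x,y)F₁(z) dμdμdμ = 0`; (b) `∫F₂(x,y)F₁(y) dμdμ = ∫(y²−1)²dμ`;
(c) `∫(y²−1)²dμ > 0` unless `μ({−1,1}) = 1`; consequently for the limiting Gaussian
process `ξ(t) = η₁(t) + η₂(2t)` with `E[η_i(s)η_j(t)] = min(s,t)D_{i,j}` and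
`D_{2,1} = (1/2)∫(y²−1)²dμ`, one has `E[ξ(t/2)(ξ(t)−ξ(t/2))] = D_{2,1}·t/2`, which is
nonzero unless `μ({−1,1}) = 1`, so `ξ` does not have independent increments. -/
theorem dependent_increments_example {Ω' : Type*} [MeasurableSpace Ω']
    (P : Measure Ω') [IsProbabilityMeasure P]
    (μ : Measure ℝ) [IsProbabilityMeasure μ]
    (hmean : ∫ x, x ∂μ = 0) (hvar : ∫ x, x ^ 2 ∂μ = 1)
    (hmom4 : Integrable (fun x : ℝ => x ^ 4) μ)
    (η : Fin 2 → ℝ → Ω' → ℝ) (D : Fin 2 → Fin 2 → ℝ)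
    (hL2 : ∀ i t, MemLp (η i t) 2 P)
    (hcov : ∀ i j : Fin 2, ∀ s t : ℝ, 0 ≤ s → 0 ≤ t →
      ∫ ω, η i s ω * η j t ω ∂P = min s t * D i j)
    (hD21 : D 1 0 = (1 / 2) * ∫ y, (y ^ 2 - 1) ^ 2 ∂μ) :
    -- `F₁(x) = ∫ F(x,y) dμ(y) = x² − 1`
    (∀ x : ℝ, ∫ y, (x ^ 2 * y ^ 2 - 1) ∂μ = x ^ 2 - 1)
    -- `F₂(x,y) = F(x,y) − ∫ F(x,z) dμ(z) = x²(y² − 1)`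
    ∧ (∀ x y : ℝ, (x ^ 2 * y ^ 2 - 1) - ∫ z, (x ^ 2 * z ^ 2 - 1) ∂μ = x ^ 2 * (y ^ 2 - 1))
    -- (a)
    ∧ (∫ x, ∫ y, ∫ z, (x ^ 2 * (y ^ 2 - 1)) * (z ^ 2 - 1) ∂μ ∂μ ∂μ = 0)
    -- (b)
    ∧ (∫ x, ∫ y, (x ^ 2 * (y ^ 2 - 1)) * (y ^ 2 - 1) ∂μ ∂μ = ∫ y, (y ^ 2 - 1) ^ 2 ∂μ)
    -- (c)
    ∧ (μ {-1, 1} ≠ 1 → 0 < ∫ y, (y ^ 2 - 1) ^ 2 ∂μ)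
    -- consequently `E[ξ(t/2)(ξ(t)−ξ(t/2))] = D_{2,1}·t/2` for `ξ(t) = η₁(t) + η₂(2t)`
    ∧ (∀ t : ℝ, 0 ≤ t →
        ∫ ω, (η 0 (t / 2) ω + η 1 t ω) *
          ((η 0 t ω + η 1 (2 * t) ω) - (η 0 (t / 2) ω + η 1 t ω)) ∂P = D 1 0 * t / 2)
    ∧ (μ {-1, 1} ≠ 1 → D 1 0 ≠ 0) := by
  -- basic integrability facts
  have hx2 : Integrable (fun x : ℝ => x ^ 2) μ := by
    refine Integrable.mono' (hmom4.add (integrable_const 1))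
      ((measurable_id.pow_const 2).aestronglyMeasurable) ?_
    refine Filter.Eventually.of_forall fun x => ?_
    have : |x ^ 2| = x ^ 2 := abs_of_nonneg (by positivity)
    simp only [Real.norm_eq_abs, this, Pi.add_apply]
    nlinarith [sq_nonneg (x ^ 2 - 1)]
  have hsq : Integrable (fun y : ℝ => (y ^ 2 - 1) ^ 2) μ := by
    have : Integrable (fun y : ℝ => y ^ 4 - 2 * y ^ 2 + 1) μ :=
      (hmom4.sub (hx2.const_mul 2)).add (integrable_const 1)
    exact this.congr (Filter.Eventually.of_forall fun y => by ring)
  have hz0 : ∫ z, (z ^ 2 - 1) ∂μ = 0 := by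
    rw [integral_sub hx2 (integrable_const 1), hvar]
    simp
  have h1 : ∀ x : ℝ, ∫ y, (x ^ 2 * y ^ 2 - 1) ∂μ = x ^ 2 - 1 := by
    intro x
    rw [integral_sub (hx2.const_mul _) (integrable_const 1), integral_const_mul, hvar]
    simp
  have hpos : μ {-1, 1} ≠ 1 → 0 < ∫ y, (y ^ 2 - 1) ^ 2 ∂μ := by
    intro hne
    by_contra hle
    push_neg at hle
    have h0 : ∫ y, (y ^ 2 - 1) ^ 2 ∂μ = 0 :=
      le_antisymm hle (integral_nonneg fun y => sq_nonneg _)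
    have hae : (fun y : ℝ => (y ^ 2 - 1) ^ 2) =ᵐ[μ] 0 :=
      (integral_eq_zero_iff_of_nonneg (fun y => sq_nonneg _) hsq).mp h0
    have hmem : ∀ᵐ y ∂μ, y ∈ ({-1, 1} : Set ℝ) := by
      filter_upwards [hae] with y hy
      have hy' : (y ^ 2 - 1) ^ 2 = 0 := by simpa using hy
      have h2 : (y - 1) * (y + 1) = 0 := by nlinarith [hy']
      simp only [Set.mem_insert_iff, Set.mem_singleton_iff]
      rcases mul_eq_zero.mp h2 with h | h
      · right; linarith
      · left; linarith
    have hc : μ ({-1, 1} : Set ℝ)ᶜ = 0 := ae_iff.mp hmem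
    have hmeas : MeasurableSet ({-1, 1} : Set ℝ) :=
      (measurableSet_singleton (1 : ℝ)).insert (-1)
    exact hne ((prob_compl_eq_zero_iff hmeas).mp hc)
  have hmul : ∀ f g : Ω' → ℝ, MemLp f 2 P → MemLp g 2 P →
      Integrable (fun ω => f ω * g ω) P := by
    intro f g hf hg
    have h : MemLp (f • g) 1 P := by
      have : ENNReal.HolderTriple 2 2 1 := ⟨by
        rw [← one_div, ENNReal.div_add_div_same, inv_one, one_add_one_eq_two]
        exact ENNReal.div_self two_ne_zero ENNReal.ofNat_ne_top⟩
      exact MemLp.smul hg hf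
    exact memLp_one_iff_integrable.mp h
  refine ⟨h1, fun x y => by rw [h1 x]; ring, ?_, ?_, hpos, ?_, ?_⟩
  · -- (a)
    have : ∀ x y : ℝ, ∫ z, (x ^ 2 * (y ^ 2 - 1)) * (z ^ 2 - 1) ∂μ = 0 := by
      intro x y
      rw [integral_const_mul, hz0, mul_zero]
    simp [this]
  · -- (b)
    have hin : ∀ x : ℝ, ∫ y, (x ^ 2 * (y ^ 2 - 1)) * (y ^ 2 - 1) ∂μ
        = x ^ 2 * ∫ y, (y ^ 2 - 1) ^ 2 ∂μ := by
      intro x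
      rw [← integral_const_mul]
      exact integral_congr_ae (Filter.Eventually.of_forall fun y => by ring)
    simp_rw [hin]
    rw [integral_mul_const, hvar, one_mul]
  · -- covariance computation
    intro t ht
    have ht2 : (0 : ℝ) ≤ t / 2 := by linarith
    have h2t : (0 : ℝ) ≤ 2 * t := by linarith
    have A := hL2 0 (t / 2)
    have B := hL2 1 t
    have C := hL2 0 t
    have E := hL2 1 (2 * t)
    have iAC := hmul _ _ A C
    have iAE := hmul _ _ A E
    have iBC := hmul _ _ B C
    have iBE := hmul _ _ B E
    have iAA := hmul _ _ A A
    have iAB := hmul _ _ A B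
    have iBA := hmul _ _ B A
    have iBB := hmul _ _ B B
    have J1 : Integrable (fun ω => η 0 (t/2) ω * η 0 t ω + η 0 (t/2) ω * η 1 (2*t) ω) P :=
      iAC.add iAE
    have J2 : Integrable (fun ω => η 1 t ω * η 0 t ω + η 1 t ω * η 1 (2*t) ω) P :=
      iBC.add iBE
    have J3 : Integrable (fun ω => η 0 (t/2) ω * η 0 (t/2) ω + η 0 (t/2) ω * η 1 t ω) P :=
      iAA.add iAB
    have J4 : Integrable (fun ω => η 1 t ω * η 0 (t/2) ω + η 1 t ω * η 1 t ω) P :=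
      iBA.add iBB
    have I1 : Integrable (fun ω => (η 0 (t/2) ω * η 0 t ω + η 0 (t/2) ω * η 1 (2*t) ω)
        + (η 1 t ω * η 0 t ω + η 1 t ω * η 1 (2*t) ω)) P := J1.add J2
    have I2 : Integrable (fun ω => (η 0 (t/2) ω * η 0 (t/2) ω + η 0 (t/2) ω * η 1 t ω)
        + (η 1 t ω * η 0 (t/2) ω + η 1 t ω * η 1 t ω)) P := J3.add J4
    have key : (fun ω => (η 0 (t / 2) ω + η 1 t ω) *
        ((η 0 t ω + η 1 (2 * t) ω) - (η 0 (t / 2) ω + η 1 t ω)))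
        = fun ω => ((η 0 (t/2) ω * η 0 t ω + η 0 (t/2) ω * η 1 (2*t) ω)
          + (η 1 t ω * η 0 t ω + η 1 t ω * η 1 (2*t) ω))
          - ((η 0 (t/2) ω * η 0 (t/2) ω + η 0 (t/2) ω * η 1 t ω)
          + (η 1 t ω * η 0 (t/2) ω + η 1 t ω * η 1 t ω)) := by
      funext ω; ring
    rw [key, integral_sub I1 I2, integral_add J1 J2, integral_add J3 J4,
      integral_add iAC iAE, integral_add iBC iBE, integral_add iAA iAB, integral_add iBA iBB]
    rw [hcov 0 0 (t/2) t ht2 ht, hcov 0 1 (t/2) (2*t) ht2 h2t,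
      hcov 1 0 t t ht ht, hcov 1 1 t (2*t) ht h2t,
      hcov 0 0 (t/2) (t/2) ht2 ht2, hcov 0 1 (t/2) t ht2 ht,
      hcov 1 0 t (t/2) ht ht2, hcov 1 1 t t ht ht]
    have m1 : min (t/2) t = t/2 := min_eq_left (by linarith)
    have m2 : min (t/2) (2*t) = t/2 := min_eq_left (by linarith)
    have m3 : min t t = t := min_self t
    have m4 : min t (2*t) = t := min_eq_left (by linarith)
    have m5 : min (t/2) (t/2) = t/2 := min_self _
    have m6 : min t (t/2) = t/2 := min_eq_right (by linarith)
    rw [m1, m2, m3, m4, m5, m6]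
    ring
  · -- D 1 0 ≠ 0
    intro hne
    have := hpos hne
    rw [hD21]
    positivity
end
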